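/- arXiv:1902.06502 — 2 statements merged into one kernel-verified Lean document; each statement's English description precedes it below -/
import Mathlib

section
/- For every special orthogonal matrix R ∈ SO(n) there exists a real skew-symmetric n×n matrix V such that R = exp_m(V); i.e., the restriction of the matrix exponential to the skew-symmetric matrices is a surjective map onto SO(n). -/
open Matrix

/-! ### Auxiliary: the standard 2×2-block complex structure entries, indexed by ℕ -/

/-- Entries of the block-diagonal matrix with 2×2 blocks `[[0,-1],[1,0]]`. -/
def expSkewJ0 (a b : ℕ) : ℝ :=
  if b = a + 1 ∧ Even a then -1 else if a = b + 1 ∧ Even b then 1 else 0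

lemma expSkewJ0_skew (a b : ℕ) : expSkewJ0 b a = - expSkewJ0 a b := by
  unfold expSkewJ0
  by_cases h1 : b = a + 1 ∧ Even a
  · have h2 : ¬(a = b + 1 ∧ Even b) := by rintro ⟨h, -⟩; omega
    have h3 : ¬(a = b + 1 ∧ Even b) := h2
    simp [h1, h2]
  · by_cases h2 : a = b + 1 ∧ Even b
    · have h4 : ¬(b = b + 1 + 1 ∧ Even (b + 1)) := by rintro ⟨h, -⟩; omega
      simp [h1, h2, h4]
    · simp [h1, h2]

lemma expSkewJ0_sum {K : ℕ} (hK : Even K) (a a' : ℕ) (ha : a < K) (ha' : a' < K) :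
    ∑ b ∈ Finset.range K, expSkewJ0 a b * expSkewJ0 b a' = -(if a = a' then (1:ℝ) else 0) := by
  obtain ⟨s, rfl⟩ := hK
  rcases Nat.even_or_odd a with he | ho
  · -- `a` even : the pair partner is `a+1`
    have hp : a + 1 < s + s := by
      rcases he with ⟨u, rfl⟩
      omega
    rw [Finset.sum_eq_single_of_mem (a + 1) (Finset.mem_range.mpr hp)]
    · have hj1 : expSkewJ0 a (a + 1) = -1 := by
        unfold expSkewJ0
        simp [he]
      have hodd : ¬ Even (a + 1) := by simpa [Nat.even_add_one] using he
      have hj2 : expSkewJ0 (a + 1) a' = if a = a' then (1:ℝ) else 0 := by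
        unfold expSkewJ0
        by_cases hf : a' = a + 1 + 1 ∧ Even (a + 1)
        · exact absurd hf.2 hodd
        · rw [if_neg hf]
          by_cases hg : a + 1 = a' + 1 ∧ Even a'
          · rw [if_pos hg, if_pos]; omega
          · rw [if_neg hg, if_neg]
            intro hc
            exact hg ⟨by omega, hc ▸ he⟩
      rw [hj1, hj2]
      ring
    · intro b hb hbne
      have hj : expSkewJ0 a b = 0 := by
        have c1 : ¬(b = a + 1 ∧ Even a) := fun hc => hbne hc.1
        have c2 : ¬(a = b + 1 ∧ Even b) := by
          rintro ⟨hab, hbev⟩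
          rcases he with ⟨u, hu⟩
          rcases hbev with ⟨v, hv⟩
          omega
        unfold expSkewJ0
        rw [if_neg c1, if_neg c2]
      rw [hj, zero_mul]
  · -- `a` odd : the pair partner is `a-1`
    obtain ⟨u, rfl⟩ := ho
    have hp : 2 * u < s + s := by omega
    have heu : Even (2 * u) := ⟨u, by ring⟩
    rw [Finset.sum_eq_single_of_mem (2 * u) (Finset.mem_range.mpr hp)]
    · have hj1 : expSkewJ0 (2 * u + 1) (2 * u) = 1 := by
        unfold expSkewJ0
        rw [if_neg (by rintro ⟨h, -⟩; omega), if_pos ⟨rfl, heu⟩]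
      have hj2 : expSkewJ0 (2 * u) a' = if 2 * u + 1 = a' then (-1:ℝ) else 0 := by
        unfold expSkewJ0
        by_cases hf : a' = 2 * u + 1 ∧ Even (2 * u)
        · rw [if_pos hf, if_pos hf.1.symm]
        · have c2 : ¬(2 * u = a' + 1 ∧ Even a') := by
            rintro ⟨h, ⟨v, hv⟩⟩
            omega
          have c3 : ¬(2 * u + 1 = a') := fun h => hf ⟨h.symm, heu⟩
          rw [if_neg hf, if_neg c2, if_neg c3]
      rw [hj1, hj2]
      simp only [one_mul]
      by_cases hq : 2 * u + 1 = a' <;> simp [hq]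
    · intro b hb hbne
      have hj : expSkewJ0 (2 * u + 1) b = 0 := by
        have c1 : ¬(b = 2 * u + 1 + 1 ∧ Even (2 * u + 1)) := by
          rintro ⟨h, ⟨v, hv⟩⟩
          omega
        have c2 : ¬(2 * u + 1 = b + 1 ∧ Even b) := by
          rintro ⟨h, -⟩
          exact hbne (by omega)
        unfold expSkewJ0
        rw [if_neg c1, if_neg c2]
      rw [hj, zero_mul]

/-! ### Auxiliary: exponential of a matrix whose square is `-diagonal (t²)` -/

lemma expSkewExpAux {n : ℕ} (M : Matrix (Fin n) (Fin n) ℝ) (t : Fin n → ℝ)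
    (h : M * M = Matrix.diagonal fun i => -(t i ^ 2)) :
    NormedSpace.exp M =
      Matrix.diagonal (fun i => Real.cos (t i)) +
        M * Matrix.diagonal (fun i => if t i = 0 then 1 else Real.sin (t i) / t i) := by
  have hexp : NormedSpace.exp M = ∑' k : ℕ, ((Nat.factorial k : ℝ)⁻¹) • M ^ k := by
    letI : NormedRing (Matrix (Fin n) (Fin n) ℝ) := Matrix.linftyOpNormedRing
    letI : NormedAlgebra ℝ (Matrix (Fin n) (Fin n) ℝ) := Matrix.linftyOpNormedAlgebra
    exact congrFun (NormedSpace.exp_eq_tsum (𝕂 := ℝ)) M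
  have hMsq : ∀ k : ℕ, M ^ (2 * k) = Matrix.diagonal fun i => (-(t i ^ 2)) ^ k := by
    intro k
    rw [pow_mul, sq, h, Matrix.diagonal_pow]
    rfl
  -- the even part
  have heven : HasSum (fun k : ℕ => (((Nat.factorial (2 * k)) : ℝ)⁻¹) • M ^ (2 * k))
      (Matrix.diagonal fun i => Real.cos (t i)) := by
    have h1 : ∀ i, HasSum (fun k : ℕ => (((Nat.factorial (2 * k)) : ℝ)⁻¹) • (-(t i ^ 2)) ^ k)
        (Real.cos (t i)) := by
      intro i
      have hc := Real.hasSum_cos (t i)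
      convert hc using 2 with k
      have hneg : (-(t i ^ 2)) ^ k = (-1 : ℝ) ^ k * t i ^ (2 * k) := by
        rw [← neg_one_mul, mul_pow, pow_mul]
      rw [smul_eq_mul, hneg]
      ring
    have h2 : HasSum (fun k : ℕ => fun i => (((Nat.factorial (2 * k)) : ℝ)⁻¹) • (-(t i ^ 2)) ^ k)
        (fun i => Real.cos (t i)) := Pi.hasSum.mpr h1
    have h3 := h2.matrix_diagonal
    convert h3 using 2 with k
    rw [hMsq k]
    rw [← Matrix.diagonal_smul]
    rfl
  -- the odd part
  have hodd : HasSum (fun k : ℕ => (((Nat.factorial (2 * k + 1)) : ℝ)⁻¹) • M ^ (2 * k + 1))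
      (M * Matrix.diagonal (fun i => if t i = 0 then 1 else Real.sin (t i) / t i)) := by
    have h1 : ∀ i, HasSum (fun k : ℕ => (((Nat.factorial (2 * k + 1)) : ℝ)⁻¹) • (-(t i ^ 2)) ^ k)
        (if t i = 0 then 1 else Real.sin (t i) / t i) := by
      intro i
      by_cases ht : t i = 0
      · rw [if_pos ht]
        have hs := hasSum_single (f := fun k : ℕ => (((Nat.factorial (2 * k + 1)) : ℝ)⁻¹) • (-(t i ^ 2)) ^ k)
          0 (by
            intro k hk
            rw [ht]
            simp [zero_pow hk])
        simpa [ht] using hs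
      · rw [if_neg ht]
        have hs := (Real.hasSum_sin (t i)).div_const (t i)
        convert hs using 1
        · rfl
        funext k
        have hneg : (-(t i ^ 2)) ^ k = (-1 : ℝ) ^ k * t i ^ (2 * k) := by
          rw [← neg_one_mul, mul_pow, pow_mul]
        rw [smul_eq_mul, hneg]
        have : t i ^ (2 * k + 1) = t i ^ (2 * k) * t i := by ring
        rw [this]
        field_simp
    have h2 : HasSum (fun k : ℕ => fun i => (((Nat.factorial (2 * k + 1)) : ℝ)⁻¹) • (-(t i ^ 2)) ^ k)
        (fun i => if t i = 0 then 1 else Real.sin (t i) / t i) := Pi.hasSum.mpr h1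
    have h3 := (h2.matrix_diagonal).map (AddMonoidHom.mulLeft M)
      (continuous_const.matrix_mul continuous_id)
    convert h3 using 2 with k
    swap
    · rfl
    show (((Nat.factorial (2 * k + 1)) : ℝ)⁻¹) • M ^ (2 * k + 1)
        = M * Matrix.diagonal fun i => (((Nat.factorial (2 * k + 1)) : ℝ)⁻¹) • (-(t i ^ 2)) ^ k
    have : (Matrix.diagonal fun i => (((Nat.factorial (2 * k + 1)) : ℝ)⁻¹) • (-(t i ^ 2)) ^ k)
        = (((Nat.factorial (2 * k + 1)) : ℝ)⁻¹) • Matrix.diagonal fun i => (-(t i ^ 2)) ^ k := by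
      rw [← Matrix.diagonal_smul]
      rfl
    rw [this, mul_smul_comm, ← hMsq k, pow_succ']
  have hsum : HasSum (fun k : ℕ => ((Nat.factorial k : ℝ)⁻¹) • M ^ k)
      (Matrix.diagonal (fun i => Real.cos (t i)) +
        M * Matrix.diagonal (fun i => if t i = 0 then 1 else Real.sin (t i) / t i)) :=
    HasSum.even_add_odd heven hodd
  rw [hexp]
  exact hsum.tsum_eq

/-- Every special orthogonal matrix is the matrix exponential of a
skew-symmetric matrix: `exp_m|_{Skew(n)} : Skew(n) → SO(n)` is surjective. -/
theorem exp_skew_surjective_onto_SO (n : ℕ) (R : Matrix (Fin n) (Fin n) ℝ)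
    (h1 : Rᵀ * R = 1) (h2 : R * Rᵀ = 1) (h3 : R.det = 1) :
    ∃ V : Matrix (Fin n) (Fin n) ℝ, Vᵀ = -V ∧ NormedSpace.exp V = R := by
  classical
  -- diagonalize the symmetric matrix `R + Rᵀ`
  have hSherm : (R + Rᵀ).IsHermitian := by
    rw [Matrix.IsHermitian, Matrix.conjTranspose_eq_transpose_of_trivial,
      Matrix.transpose_add, Matrix.transpose_transpose, add_comm]
  set Q : Matrix (Fin n) (Fin n) ℝ := (hSherm.eigenvectorUnitary : Matrix (Fin n) (Fin n) ℝ)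
    with hQdef
  have hQmem : Q ∈ Matrix.unitaryGroup (Fin n) ℝ := (hSherm.eigenvectorUnitary).2
  have hstarQ : star Q = Qᵀ := by
    rw [Matrix.star_eq_conjTranspose, Matrix.conjTranspose_eq_transpose_of_trivial]
  have hQQt : Q * Qᵀ = 1 := by
    rw [← hstarQ]; exact Matrix.mem_unitaryGroup_iff.mp hQmem
  have hQtQ : Qᵀ * Q = 1 := by
    rw [← hstarQ]; exact Matrix.mem_unitaryGroup_iff'.mp hQmem
  set ev : Fin n → ℝ := hSherm.eigenvalues with hevdef
  have hspec : R + Rᵀ = Q * Matrix.diagonal ev * Qᵀ := by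
    have := hSherm.spectral_theorem
    rw [← hstarQ]
    rw [this, Unitary.conjStarAlgAut_apply]
    rfl
  -- the conjugated matrix
  set P : Matrix (Fin n) (Fin n) ℝ := Qᵀ * R * Q with hPdef
  have hPt : Pᵀ = Qᵀ * Rᵀ * Q := by
    rw [hPdef, Matrix.transpose_mul, Matrix.transpose_mul, Matrix.transpose_transpose,
      mul_assoc]
  have hP1 : Pᵀ * P = 1 := by
    rw [hPt, hPdef]
    calc Qᵀ * Rᵀ * Q * (Qᵀ * R * Q) = Qᵀ * Rᵀ * (Q * Qᵀ) * R * Q := by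
          simp only [mul_assoc]
      _ = Qᵀ * (Rᵀ * R) * Q := by rw [hQQt]; simp only [mul_assoc, mul_one]
      _ = 1 := by rw [h1, mul_one, hQtQ]
  have hP2 : P * Pᵀ = 1 := by
    rw [hPt, hPdef]
    calc Qᵀ * R * Q * (Qᵀ * Rᵀ * Q) = Qᵀ * R * (Q * Qᵀ) * Rᵀ * Q := by
          simp only [mul_assoc]
      _ = Qᵀ * (R * Rᵀ) * Q := by rw [hQQt]; simp only [mul_assoc, mul_one]
      _ = 1 := by rw [h2, mul_one, hQtQ]
  have hPdet : P.det = 1 := by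
    have hq : Q.det * Q.det = 1 := by
      have := congrArg Matrix.det hQtQ
      rwa [Matrix.det_mul, Matrix.det_transpose, Matrix.det_one] at this
    rw [hPdef, Matrix.det_mul, Matrix.det_mul, Matrix.det_transpose, h3, mul_one, hq]
  have hD : P + Pᵀ = Matrix.diagonal ev := by
    rw [hPdef, hPt]
    have hfactor : Qᵀ * R * Q + Qᵀ * Rᵀ * Q = Qᵀ * (R + Rᵀ) * Q := by noncomm_ring
    rw [hfactor, hspec]
    calc Qᵀ * (Q * Matrix.diagonal ev * Qᵀ) * Q
        = (Qᵀ * Q) * Matrix.diagonal ev * (Qᵀ * Q) := by simp only [mul_assoc]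
      _ = Matrix.diagonal ev := by rw [hQtQ, one_mul, mul_one]
  -- basic entry facts
  set c : Fin n → ℝ := fun i => P i i with hcdef
  have hev2c : ∀ i, ev i = 2 * c i := by
    intro i
    have := congrFun (congrFun hD i) i
    simp only [Matrix.add_apply, Matrix.transpose_apply, Matrix.diagonal_apply_eq] at this
    rw [← this, hcdef]; ring
  have hoff : ∀ i j, i ≠ j → P j i = -P i j := by
    intro i j hij
    have := congrFun (congrFun hD i) j
    simp only [Matrix.add_apply, Matrix.transpose_apply] at this
    rw [Matrix.diagonal_apply_ne _ hij] at this
    linarith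
  -- `P` commutes with `diagonal ev`, hence vanishes across distinct eigenvalue blocks
  have hcomm : P * Matrix.diagonal ev = Matrix.diagonal ev * P := by
    rw [← hD]
    calc P * (P + Pᵀ) = P * P + P * Pᵀ := by rw [mul_add]
      _ = P * P + Pᵀ * P := by rw [hP1, hP2]
      _ = (P + Pᵀ) * P := by rw [add_mul]
  have hzero : ∀ i j, c i ≠ c j → P i j = 0 := by
    intro i j hc
    by_contra hP0
    have hthis := congrFun (congrFun hcomm i) j
    rw [Matrix.mul_diagonal, Matrix.diagonal_mul, hev2c, hev2c, mul_comm (P i j)] at hthis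
    have := mul_right_cancel₀ hP0 hthis
    exact hc (by linarith)
  -- column and row norms
  have hcolsum : ∀ j, ∑ k, P k j * P k j = 1 := by
    intro j
    have := congrFun (congrFun hP1 j) j
    rw [Matrix.mul_apply] at this
    simpa [Matrix.transpose_apply] using this
  have hrowsum : ∀ i, ∑ k, P i k * P i k = 1 := by
    intro i
    have := congrFun (congrFun hP2 i) i
    rw [Matrix.mul_apply] at this
    simpa [Matrix.transpose_apply] using this
  have hcle : ∀ i, -1 ≤ c i ∧ c i ≤ 1 := by
    intro i
    have hsum := hcolsum i
    have hterm : c i * c i ≤ 1 := by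
      rw [← hsum]
      exact Finset.single_le_sum (f := fun k => P k i * P k i)
        (fun k _ => mul_self_nonneg _) (Finset.mem_univ i)
    constructor <;> nlinarith
  have hcol0 : ∀ j, c j = 1 ∨ c j = -1 → ∀ i, i ≠ j → P i j = 0 := by
    intro j hcj i hij
    have hsum := hcolsum j
    have hPjj : P j j * P j j = 1 := by
      have : P j j = c j := rfl
      rw [this]; rcases hcj with h | h <;> rw [h] <;> norm_num
    have herase := Finset.sum_erase_add Finset.univ (fun k => P k j * P k j) (Finset.mem_univ j)
    rw [hsum] at herase
    have hrest : ∑ k ∈ Finset.univ.erase j, P k j * P k j = 0 := by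
      linarith [herase, hPjj]
    have hall := (Finset.sum_eq_zero_iff_of_nonneg
      (fun k _ => mul_self_nonneg (P k j))).mp hrest i
      (Finset.mem_erase.mpr ⟨hij, Finset.mem_univ i⟩)
    exact mul_self_eq_zero.mp hall
  have hrow0 : ∀ i, c i = 1 ∨ c i = -1 → ∀ j, j ≠ i → P i j = 0 := by
    intro i hci j hij
    have hsum := hrowsum i
    have hPii : P i i * P i i = 1 := by
      have : P i i = c i := rfl
      rw [this]; rcases hci with h | h <;> rw [h] <;> norm_num
    have herase := Finset.sum_erase_add Finset.univ (fun k => P i k * P i k) (Finset.mem_univ i)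
    rw [hsum] at herase
    have hrest : ∑ k ∈ Finset.univ.erase i, P i k * P i k = 0 := by
      linarith [herase, hPii]
    have hall := (Finset.sum_eq_zero_iff_of_nonneg
      (fun k _ => mul_self_nonneg (P i k))).mp hrest j
      (Finset.mem_erase.mpr ⟨hij, Finset.mem_univ j⟩)
    exact mul_self_eq_zero.mp hall
  -- the angles
  set θ : Fin n → ℝ := fun i => if c i = -1 then 0 else Real.arccos (c i) with hθdef
  have hθcos : ∀ i, c i ≠ -1 → Real.cos (θ i) = c i := by
    intro i h
    rw [hθdef]
    simp only [if_neg h]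
    exact Real.cos_arccos (hcle i).1 (hcle i).2
  have hθeq : ∀ i j, c i = c j → θ i = θ j := by
    intro i j h
    rw [hθdef]
    simp only [h]
  have hθm1 : ∀ i, c i = -1 → θ i = 0 := by
    intro i h; rw [hθdef]; simp only [if_pos h]
  have hθp1 : ∀ i, c i = 1 → θ i = 0 := by
    intro i h
    rw [hθdef]
    simp only [h]
    norm_num [Real.arccos_one]
  have hθne : ∀ i, c i ≠ 1 → c i ≠ -1 →
      θ i ≠ 0 ∧ 0 < Real.sin (θ i) ∧ Real.sin (θ i) ^ 2 = 1 - c i ^ 2 := by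
    intro i hc1 hcm1
    have hθi : θ i = Real.arccos (c i) := if_neg hcm1
    have hlt : c i < 1 := lt_of_le_of_ne (hcle i).2 hc1
    have hpos : 0 < θ i := by rw [hθi]; exact Real.arccos_pos.mpr hlt
    have hsin : Real.sin (θ i) = Real.sqrt (1 - c i ^ 2) := by rw [hθi, Real.sin_arccos]
    have hgt : -1 < c i := lt_of_le_of_ne (hcle i).1 (Ne.symm hcm1)
    have hsq : (0:ℝ) < 1 - c i ^ 2 := by nlinarith [hgt, hlt]
    exact ⟨ne_of_gt hpos, by rw [hsin]; exact Real.sqrt_pos.mpr hsq,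
      by rw [hsin, Real.sq_sqrt hsq.le]⟩
  -- the skew part of `P`
  set A : Matrix (Fin n) (Fin n) ℝ := (2:ℝ)⁻¹ • (P - Pᵀ) with hAdef
  have hAapp : ∀ i j, A i j = (2:ℝ)⁻¹ * (P i j - P j i) := fun i j => rfl
  have hAt : Aᵀ = -A := by
    rw [hAdef, Matrix.transpose_smul, Matrix.transpose_sub, Matrix.transpose_transpose,
      ← smul_neg, neg_sub]
  have hAdg : ∀ i, A i i = 0 := by
    intro i; rw [hAapp]; ring
  have hAoff : ∀ i j, i ≠ j → A i j = P i j := by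
    intro i j hij
    rw [hAapp, hoff i j hij]
    ring
  have hAc : ∀ i j, c i ≠ c j → A i j = 0 := by
    intro i j hc
    have hij : i ≠ j := by rintro rfl; exact hc rfl
    rw [hAoff i j hij]
    exact hzero i j hc
  have hApm : ∀ j, (c j = 1 ∨ c j = -1) → ∀ i, A i j = 0 ∧ A j i = 0 := by
    intro j hcj i
    by_cases hij : i = j
    · subst hij
      exact ⟨hAdg i, hAdg i⟩
    · constructor
      · rw [hAapp, hcol0 j hcj i hij, hrow0 j hcj i hij]; ring
      · rw [hAapp, hcol0 j hcj i hij, hrow0 j hcj i hij]; ring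
  have hAsq : A * A = Matrix.diagonal (fun i => c i ^ 2 - 1) := by
    have hexpand : (P - Pᵀ) * (P - Pᵀ)
        = (P + Pᵀ) * (P + Pᵀ) - (P * Pᵀ + P * Pᵀ) - (Pᵀ * P + Pᵀ * P) := by noncomm_ring
    have hAA : A * A = ((2:ℝ)⁻¹ * (2:ℝ)⁻¹) • ((P - Pᵀ) * (P - Pᵀ)) := by
      rw [hAdef, Matrix.smul_mul, Matrix.mul_smul, smul_smul]
    rw [hAA, hexpand, hP2, hP1, hD, Matrix.diagonal_mul_diagonal]
    ext i j
    by_cases hij : i = j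
    · subst hij
      simp only [Matrix.smul_apply, Matrix.sub_apply, Matrix.add_apply,
        Matrix.diagonal_apply_eq, Matrix.one_apply_eq, smul_eq_mul]
      rw [hev2c]
      ring
    · simp only [Matrix.smul_apply, Matrix.sub_apply, Matrix.add_apply, smul_eq_mul,
        Matrix.diagonal_apply_ne _ hij, Matrix.one_apply_ne hij]
      ring
  -- the rotation generator `V₁`
  set g : Fin n → ℝ := fun i => θ i / Real.sin (θ i) with hgdef
  have hgeq : ∀ i j, c i = c j → g i = g j := by
    intro i j h
    rw [hgdef]
    simp only [hθeq i j h]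
  set V₁ : Matrix (Fin n) (Fin n) ℝ := Matrix.diagonal g * A with hV₁def
  have hV₁app : ∀ i j, V₁ i j = g i * A i j := by
    intro i j
    rw [hV₁def, Matrix.diagonal_mul]
  have hAg : A * Matrix.diagonal g = Matrix.diagonal g * A := by
    ext i j
    rw [Matrix.mul_diagonal, Matrix.diagonal_mul]
    by_cases hc : c i = c j
    · rw [hgeq i j hc]; ring
    · rw [hAc i j hc]; ring
  have hV₁t : V₁ᵀ = -V₁ := by
    rw [hV₁def, Matrix.transpose_mul, Matrix.diagonal_transpose, hAt, Matrix.neg_mul, hAg]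
  have hV₁sq : V₁ * V₁ = Matrix.diagonal (fun i => -(θ i ^ 2)) := by
    have hcalc : V₁ * V₁ = Matrix.diagonal (fun i => g i * g i * (c i ^ 2 - 1)) := by
      calc V₁ * V₁ = Matrix.diagonal g * (A * Matrix.diagonal g) * A := by
            rw [hV₁def]; simp only [mul_assoc]
        _ = Matrix.diagonal g * Matrix.diagonal g * (A * A) := by
            rw [hAg]; simp only [mul_assoc]
        _ = Matrix.diagonal (fun i => g i * g i) * Matrix.diagonal (fun i => c i ^ 2 - 1) := by
            rw [Matrix.diagonal_mul_diagonal, hAsq]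
        _ = Matrix.diagonal (fun i => g i * g i * (c i ^ 2 - 1)) :=
            Matrix.diagonal_mul_diagonal _ _
    rw [hcalc]
    refine congrArg Matrix.diagonal (funext fun i => ?_)
    by_cases h1' : c i = 1
    · rw [hθp1 i h1', h1']
      ring
    · by_cases h2' : c i = -1
      · rw [hθm1 i h2', h2']
        ring
      · obtain ⟨hne, hpos, hsinsq⟩ := hθne i h1' h2'
        have hs : Real.sin (θ i) ≠ 0 := ne_of_gt hpos
        have hrw : (c i ^ 2 - 1) = -(Real.sin (θ i) ^ 2) := by linarith [hsinsq]
        rw [hrw, hgdef]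
        simp only
        field_simp
  -- exponential of `V₁`
  have hexpV₁ : NormedSpace.exp V₁ = Matrix.diagonal (fun i => Real.cos (θ i)) + A := by
    rw [expSkewExpAux V₁ θ hV₁sq]
    congr 1
    ext i j
    rw [Matrix.mul_diagonal]
    by_cases hA0 : A i j = 0
    · rw [hV₁app, hA0]
      simp [hA0]
    · have hcij : c i = c j := by
        by_contra hc
        exact hA0 (hAc i j hc)
      have h1' : c j ≠ 1 := fun h => hA0 (hApm j (Or.inl h) i).1
      have h2' : c j ≠ -1 := fun h => hA0 (hApm j (Or.inr h) i).1
      obtain ⟨hne, hpos, -⟩ := hθne j h1' h2'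
      have hs : Real.sin (θ j) ≠ 0 := ne_of_gt hpos
      rw [hV₁app, if_neg hne, hgeq i j hcij]
      have hgj : g j = θ j / Real.sin (θ j) := rfl
      rw [hgj]
      field_simp
      try ring
  -- sign pattern of the `-1`-eigenspace
  set ε : Fin n → ℝ := fun i => if c i = -1 then -1 else 1 with hεdef
  have hεapp : ∀ j, ε j = if c j = -1 then -1 else 1 := fun _ => rfl
  have hX : NormedSpace.exp V₁ = P * Matrix.diagonal ε := by
    rw [hexpV₁]
    ext i j
    rw [Matrix.add_apply, Matrix.mul_diagonal, hεapp]
    by_cases hcj : c j = -1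
    · rw [if_pos hcj]
      by_cases hij : i = j
      · subst hij
        rw [Matrix.diagonal_apply_eq, hθm1 i hcj, (hApm i (Or.inr hcj) i).1]
        have hPii : P i i = c i := rfl
        rw [hPii, hcj]
        norm_num
      · rw [Matrix.diagonal_apply_ne _ hij, hcol0 j (Or.inr hcj) i hij,
          (hApm j (Or.inr hcj) i).1]
        ring
    · rw [if_neg hcj]
      by_cases hij : i = j
      · subst hij
        rw [Matrix.diagonal_apply_eq, hAdg i, hθcos i hcj]
        have hPii : P i i = c i := rfl
        rw [hPii]
        ring
      · rw [Matrix.diagonal_apply_ne _ hij, hAoff i j hij]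
        ring
  -- the `-1`-eigenvalue has even multiplicity
  have hdetX : (NormedSpace.exp V₁).det
      = (-1 : ℝ) ^ (Finset.univ.filter (fun i => c i = -1)).card := by
    rw [hX, Matrix.det_mul, hPdet, one_mul, Matrix.det_diagonal]
    have : ∀ i, ε i = if c i = -1 then (-1:ℝ) else 1 := hεapp
    simp only [this]
    rw [Finset.prod_ite]
    simp [Finset.prod_const]
  have hdetpos : 0 < (NormedSpace.exp V₁).det := by
    have hhalf : V₁ = (2:ℝ)⁻¹ • V₁ + (2:ℝ)⁻¹ • V₁ := by
      rw [← add_smul]; norm_num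
    have hsplit : NormedSpace.exp V₁
        = NormedSpace.exp ((2:ℝ)⁻¹ • V₁) * NormedSpace.exp ((2:ℝ)⁻¹ • V₁) := by
      conv_lhs => rw [hhalf]
      exact Matrix.exp_add_of_commute _ _ (Commute.refl _)
    have hunit : IsUnit (NormedSpace.exp ((2:ℝ)⁻¹ • V₁)).det :=
      (Matrix.isUnit_iff_isUnit_det _).mp (Matrix.isUnit_exp _)
    have hne0 : (NormedSpace.exp ((2:ℝ)⁻¹ • V₁)).det ≠ 0 := hunit.ne_zero
    rw [hsplit, Matrix.det_mul]
    exact mul_self_pos.mpr hne0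
  have hevenCard : Even (Finset.univ.filter (fun i => c i = -1)).card := by
    rw [hdetX] at hdetpos
    by_contra hodd
    rw [Nat.not_even_iff_odd] at hodd
    rw [hodd.neg_one_pow] at hdetpos
    linarith
  -- build the block `W` on the `-1`-eigenspace
  have hKeven : Even (Fintype.card {i : Fin n // c i = -1}) := by
    rw [Fintype.card_subtype]
    exact hevenCard
  set K := Fintype.card {i : Fin n // c i = -1} with hKdef
  set e : {i : Fin n // c i = -1} ≃ Fin K := Fintype.equivFin _ with hedef
  set W : Matrix (Fin n) (Fin n) ℝ := Matrix.of (fun i j =>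
    if h : c i = -1 ∧ c j = -1 then Real.pi * expSkewJ0 (e ⟨i, h.1⟩) (e ⟨j, h.2⟩) else 0)
    with hWdef
  have hWapp : ∀ i j, W i j = if h : c i = -1 ∧ c j = -1 then
      Real.pi * expSkewJ0 (e ⟨i, h.1⟩) (e ⟨j, h.2⟩) else 0 := fun i j => rfl
  set τ : Fin n → ℝ := fun i => if c i = -1 then Real.pi else 0 with hτdef
  have hτapp : ∀ i, τ i = if c i = -1 then Real.pi else 0 := fun _ => rfl
  have hWt : Wᵀ = -W := by
    ext i j
    rw [Matrix.transpose_apply, Matrix.neg_apply, hWapp, hWapp]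
    by_cases h : c i = -1 ∧ c j = -1
    · rw [dif_pos (And.intro h.2 h.1), dif_pos h, expSkewJ0_skew]
      ring
    · have h' : ¬(c j = -1 ∧ c i = -1) := fun hh => h ⟨hh.2, hh.1⟩
      rw [dif_neg h', dif_neg h, neg_zero]
  have hWsq : W * W = Matrix.diagonal (fun i => -(τ i ^ 2)) := by
    ext i j
    rw [Matrix.mul_apply]
    by_cases hi : c i = -1
    · by_cases hj : c j = -1
      · have hstep1 : ∑ k, W i k * W k j
            = ∑ k ∈ Finset.univ.filter (fun k => c k = -1), W i k * W k j := by
          refine (Finset.sum_filter_of_ne ?_).symm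
          intro k _ hne
          by_contra hk
          exact hne (by rw [hWapp k j, dif_neg (fun hh => hk hh.1), mul_zero])
        have hstep2 : ∑ k ∈ Finset.univ.filter (fun k => c k = -1), W i k * W k j
            = ∑ k : {i : Fin n // c i = -1}, W i ↑k * W ↑k j :=
          Finset.sum_subtype _ (by simp) _
        have hstep3 : ∑ k : {i : Fin n // c i = -1}, W i ↑k * W ↑k j
            = ∑ b : Fin K, W i ↑(e.symm b) * W ↑(e.symm b) j :=
          (Equiv.sum_comp e.symm (fun k : {i : Fin n // c i = -1} => W i ↑k * W ↑k j)).symm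
        have hstep4 : ∀ b : Fin K, W i ↑(e.symm b) * W ↑(e.symm b) j
            = Real.pi * Real.pi *
              (expSkewJ0 (e ⟨i, hi⟩) b * expSkewJ0 b (e ⟨j, hj⟩)) := by
          intro b
          have hmem : c ↑(e.symm b) = -1 := (e.symm b).2
          rw [hWapp, hWapp, dif_pos ⟨hi, hmem⟩, dif_pos ⟨hmem, hj⟩]
          have hsub : (⟨↑(e.symm b), hmem⟩ : {i : Fin n // c i = -1}) = e.symm b :=
            Subtype.ext rfl
          rw [hsub, Equiv.apply_symm_apply]
          ring
        have hstep5 : ∑ b : Fin K, (expSkewJ0 (e ⟨i, hi⟩) ↑b * expSkewJ0 ↑b (e ⟨j, hj⟩))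
            = -(if ((e ⟨i, hi⟩ : Fin K) : ℕ) = ((e ⟨j, hj⟩ : Fin K) : ℕ) then (1:ℝ) else 0) := by
          rw [Fin.sum_univ_eq_sum_range
            (fun b => expSkewJ0 (e ⟨i, hi⟩) b * expSkewJ0 b (e ⟨j, hj⟩)) K]
          exact expSkewJ0_sum hKeven _ _ (e ⟨i, hi⟩).isLt (e ⟨j, hj⟩).isLt
        rw [hstep1, hstep2, hstep3]
        rw [Finset.sum_congr rfl (fun b _ => hstep4 b), ← Finset.mul_sum, hstep5]
        by_cases hij : i = j
        · subst hij
          rw [Matrix.diagonal_apply_eq, hτapp, if_pos hi, if_pos rfl]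
          ring
        · have hne : ((e ⟨i, hi⟩ : Fin K) : ℕ) ≠ ((e ⟨j, hj⟩ : Fin K) : ℕ) := by
            intro hv
            apply hij
            have : (⟨i, hi⟩ : {i : Fin n // c i = -1}) = ⟨j, hj⟩ :=
              e.injective (Fin.val_injective hv)
            exact congrArg Subtype.val this
          rw [Matrix.diagonal_apply_ne _ hij, if_neg hne]
          ring
      · have hij : i ≠ j := fun h => hj (h ▸ hi)
        rw [Matrix.diagonal_apply_ne _ hij]
        refine Finset.sum_eq_zero fun k _ => ?_
        rw [hWapp k j, dif_neg (fun hh => hj hh.2), mul_zero]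
    · have hzero' : ∑ k, W i k * W k j = 0 :=
        Finset.sum_eq_zero fun k _ => by
          rw [hWapp i k, dif_neg (fun hh => hi hh.1), zero_mul]
      rw [hzero']
      by_cases hij : i = j
      · subst hij
        rw [Matrix.diagonal_apply_eq, hτapp, if_neg hi]
        ring
      · rw [Matrix.diagonal_apply_ne _ hij]
  have hWV₁ : V₁ * W = 0 := by
    ext i j
    rw [Matrix.mul_apply, Matrix.zero_apply]
    refine Finset.sum_eq_zero fun k _ => ?_
    by_cases hk : c k = -1
    · rw [hV₁app, (hApm k (Or.inr hk) i).1, mul_zero, zero_mul]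
    · rw [hWapp, dif_neg (fun hh => hk hh.1), mul_zero]
  have hV₁W : W * V₁ = 0 := by
    ext i j
    rw [Matrix.mul_apply, Matrix.zero_apply]
    refine Finset.sum_eq_zero fun k _ => ?_
    by_cases hk : c k = -1
    · rw [hV₁app, (hApm k (Or.inr hk) j).2, mul_zero, mul_zero]
    · rw [hWapp, dif_neg (fun hh => hk hh.2), zero_mul]
  have hexpW : NormedSpace.exp W = Matrix.diagonal ε := by
    rw [expSkewExpAux W τ hWsq]
    have hzeroM : W * Matrix.diagonal (fun i => if τ i = 0 then 1 else Real.sin (τ i) / τ i)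
        = 0 := by
      ext i j
      rw [Matrix.mul_diagonal, Matrix.zero_apply]
      by_cases hj : c j = -1
      · have hτj : τ j = Real.pi := by rw [hτapp, if_pos hj]
        rw [hτj, if_neg Real.pi_ne_zero, Real.sin_pi, zero_div, mul_zero]
      · rw [hWapp, dif_neg (fun hh => hj hh.2), zero_mul]
    rw [hzeroM, add_zero]
    refine congrArg Matrix.diagonal (funext fun i => ?_)
    rw [hεapp, hτapp]
    by_cases hi : c i = -1
    · rw [if_pos hi, if_pos hi, Real.cos_pi]
    · rw [if_neg hi, if_neg hi, Real.cos_zero]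
  -- assembling everything
  have hcommVW : Commute V₁ W := by
    show V₁ * W = W * V₁
    rw [hWV₁, hV₁W]
  have hexpV' : NormedSpace.exp (V₁ + W) = P := by
    rw [Matrix.exp_add_of_commute V₁ W hcommVW, hX, hexpW, mul_assoc,
      Matrix.diagonal_mul_diagonal]
    have hone : (fun i => ε i * ε i) = fun _ => (1:ℝ) := funext fun i => by
      rw [hεapp]
      by_cases hi : c i = -1 <;> simp [hi]
    rw [hone, Matrix.diagonal_one, mul_one]
  refine ⟨Q * (V₁ + W) * Qᵀ, ?_, ?_⟩
  · have ht : (V₁ + W)ᵀ = -(V₁ + W) := by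
      rw [Matrix.transpose_add, hV₁t, hWt, neg_add]
    rw [Matrix.transpose_mul, Matrix.transpose_mul, Matrix.transpose_transpose, ht]
    simp only [Matrix.mul_neg, Matrix.neg_mul, mul_assoc]
  · have hQinv : Q⁻¹ = Qᵀ := Matrix.inv_eq_right_inv hQQt
    have hQunit : IsUnit Q := by
      rw [Matrix.isUnit_iff_isUnit_det]
      have hq : Q.det * Q.det = 1 := by
        have := congrArg Matrix.det hQtQ
        rwa [Matrix.det_mul, Matrix.det_transpose, Matrix.det_one] at this
      exact IsUnit.of_mul_eq_one _ hq
    rw [← hQinv, Matrix.exp_conj Q (V₁ + W) hQunit, hQinv, hexpV', hPdef]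
    calc Q * (Qᵀ * R * Q) * Qᵀ = (Q * Qᵀ) * R * (Q * Qᵀ) := by
          simp only [mul_assoc]
      _ = R := by rw [hQQt, one_mul, mul_one]
end

section
/- Let U : J → ℝ^{n×m}, Σ : J → ℝ^{m×m}, Z : J → ℝ^{m×m} be matrix functions differentiable at μ₀ ∈ J such that for all μ ∈ J: U(μ)ᵀU(μ) = I_m, Z(μ)ᵀZ(μ) = I_m, and Σ(μ) = diag(σ₁(μ),…,σ_m(μ)) is diagonal. Set S(μ) = U(μ)Σ(μ)Z(μ)ᵀ. Then the derivative of each singular value satisfies σ̇_j(μ₀) = (u^j)ᵀ · Ṡ(μ₀) · z^j for j = 1,…,m, where u^j and z^j denote the j-th columns of U(μ₀) and Z(μ₀) respectively, and Ṡ, σ̇_j denote derivatives at μ₀. -/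
open Matrix

/-- Differentiating the SVD `S(μ) = U(μ)Σ(μ)Z(μ)ᵀ` (with `U`
column-orthonormal, `Z` orthogonal, `Σ` diagonal on a neighborhood `J` of `μ₀`):
the derivative of the `j`-th singular value satisfies
`σ̇_j(μ₀) = (u^j)ᵀ·Ṡ(μ₀)·z^j`, where `u^j, z^j` are the `j`-th columns of
`U(μ₀), Z(μ₀)` and `Ṡ(μ₀) = S'` is the derivative of `S` at `μ₀`. -/
theorem svd_singular_value_derivative (n m : ℕ) (J : Set ℝ) (μ₀ : ℝ)
    (hJ : J ∈ nhds μ₀)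
    (U : ℝ → Matrix (Fin n) (Fin m) ℝ)
    (Sig Z : ℝ → Matrix (Fin m) (Fin m) ℝ)
    (U' S' : Matrix (Fin n) (Fin m) ℝ)
    (Sig' Z' : Matrix (Fin m) (Fin m) ℝ)
    (hUorth : ∀ μ ∈ J, (U μ)ᵀ * U μ = 1)
    (hZorth : ∀ μ ∈ J, (Z μ)ᵀ * Z μ = 1 ∧ Z μ * (Z μ)ᵀ = 1)
    (hdiag : ∀ μ ∈ J, (Sig μ).IsDiag)
    (hU : ∀ i j, HasDerivAt (fun μ => U μ i j) (U' i j) μ₀)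
    (hSig : ∀ i j, HasDerivAt (fun μ => Sig μ i j) (Sig' i j) μ₀)
    (hZ : ∀ i j, HasDerivAt (fun μ => Z μ i j) (Z' i j) μ₀)
    (hS : ∀ i j, HasDerivAt (fun μ => (U μ * Sig μ * (Z μ)ᵀ) i j) (S' i j) μ₀) :
    ∀ j : Fin m, Sig' j j = ∑ a : Fin n, ∑ b : Fin m, U μ₀ a j * S' a b * Z μ₀ b j := by
  intro j
  have hμ₀ : μ₀ ∈ J := mem_of_mem_nhds hJ
  -- derivative of column-orthonormality of U
  have hUder : (∑ a, U μ₀ a j * U' a j) = 0 := by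
    have hconst : (fun μ => ∑ a, U μ a j * U μ a j) =ᶠ[nhds μ₀] fun _ => (1:ℝ) := by
      filter_upwards [hJ] with μ hμ
      have h2 := congrFun (congrFun (hUorth μ hμ) j) j
      simpa [Matrix.mul_apply, Matrix.one_apply, Matrix.transpose_apply] using h2
    have hd : HasDerivAt (fun μ => ∑ a, U μ a j * U μ a j)
        (∑ a, (U' a j * U μ₀ a j + U μ₀ a j * U' a j)) μ₀ :=
      HasDerivAt.fun_sum fun a _ => (hU a j).mul (hU a j)
    have hd0 : HasDerivAt (fun μ => ∑ a, U μ a j * U μ a j) 0 μ₀ :=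
      (hasDerivAt_const μ₀ (1:ℝ)).congr_of_eventuallyEq hconst
    have key := hd.unique hd0
    have : (∑ a, (U' a j * U μ₀ a j + U μ₀ a j * U' a j))
        = 2 * ∑ a, U μ₀ a j * U' a j := by
      rw [Finset.mul_sum]; exact Finset.sum_congr rfl fun a _ => by ring
    rw [this] at key
    linarith
  -- derivative of orthonormality of Z
  have hZder : (∑ b, Z μ₀ b j * Z' b j) = 0 := by
    have hconst : (fun μ => ∑ b, Z μ b j * Z μ b j) =ᶠ[nhds μ₀] fun _ => (1:ℝ) := by
      filter_upwards [hJ] with μ hμ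
      have h2 := congrFun (congrFun (hZorth μ hμ).1 j) j
      simpa [Matrix.mul_apply, Matrix.one_apply, Matrix.transpose_apply] using h2
    have hd : HasDerivAt (fun μ => ∑ b, Z μ b j * Z μ b j)
        (∑ b, (Z' b j * Z μ₀ b j + Z μ₀ b j * Z' b j)) μ₀ :=
      HasDerivAt.fun_sum fun b _ => (hZ b j).mul (hZ b j)
    have hd0 : HasDerivAt (fun μ => ∑ b, Z μ b j * Z μ b j) 0 μ₀ :=
      (hasDerivAt_const μ₀ (1:ℝ)).congr_of_eventuallyEq hconst
    have key := hd.unique hd0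
    have : (∑ b, (Z' b j * Z μ₀ b j + Z μ₀ b j * Z' b j))
        = 2 * ∑ b, Z μ₀ b j * Z' b j := by
      rw [Finset.mul_sum]; exact Finset.sum_congr rfl fun b _ => by ring
    rw [this] at key
    linarith
  -- the matrix form of S'
  have hS'mat : S' = U' * Sig μ₀ * (Z μ₀)ᵀ + U μ₀ * Sig' * (Z μ₀)ᵀ
      + U μ₀ * Sig μ₀ * Z'ᵀ := by
    ext i b
    have hfun : (fun μ => (U μ * Sig μ * (Z μ)ᵀ) i b)
        = fun μ => ∑ l, (∑ k, U μ i k * Sig μ k l) * Z μ b l := by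
      funext μ; simp [Matrix.mul_apply, Matrix.transpose_apply]
    have hd : HasDerivAt (fun μ => (U μ * Sig μ * (Z μ)ᵀ) i b)
        (∑ l, ((∑ k, (U' i k * Sig μ₀ k l + U μ₀ i k * Sig' k l)) * Z μ₀ b l
          + (∑ k, U μ₀ i k * Sig μ₀ k l) * Z' b l)) μ₀ := by
      rw [hfun]
      exact HasDerivAt.fun_sum fun l _ =>
        ((HasDerivAt.fun_sum fun k _ => (hU i k).mul (hSig k l)).mul (hZ b l))
    have := (hS i b).unique hd
    rw [this]
    simp only [Matrix.add_apply, Matrix.mul_apply, Matrix.transpose_apply]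
    rw [← Finset.sum_add_distrib, ← Finset.sum_add_distrib]
    refine Finset.sum_congr rfl fun l _ => ?_
    rw [Finset.sum_add_distrib, add_mul, Finset.sum_mul, Finset.sum_mul, Finset.sum_mul]
  -- orthogonality at μ₀ entrywise
  have hUo : ∀ k l : Fin m, (∑ a, U μ₀ a k * U μ₀ a l) = if k = l then 1 else 0 := by
    intro k l
    have h2 := congrFun (congrFun (hUorth μ₀ hμ₀) k) l
    simpa [Matrix.mul_apply, Matrix.one_apply, Matrix.transpose_apply] using h2
  have hZo : ∀ k l : Fin m, (∑ b, Z μ₀ b k * Z μ₀ b l) = if k = l then 1 else 0 := by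
    intro k l
    have h2 := congrFun (congrFun (hZorth μ₀ hμ₀).1 k) l
    simpa [Matrix.mul_apply, Matrix.one_apply, Matrix.transpose_apply] using h2
  have hdiag0 := hdiag μ₀ hμ₀
  -- rewrite RHS as a matrix entry
  have hRHS : (∑ a : Fin n, ∑ b : Fin m, U μ₀ a j * S' a b * Z μ₀ b j)
      = ((U μ₀)ᵀ * S' * Z μ₀) j j := by
    simp only [Matrix.mul_apply, Matrix.transpose_apply, Finset.sum_mul]
    rw [Finset.sum_comm]
  rw [hRHS, hS'mat]
  have hZZ : (Z μ₀)ᵀ * Z μ₀ = 1 := (hZorth μ₀ hμ₀).1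
  have hUU : (U μ₀)ᵀ * U μ₀ = 1 := hUorth μ₀ hμ₀
  have expand : (U μ₀)ᵀ * (U' * Sig μ₀ * (Z μ₀)ᵀ + U μ₀ * Sig' * (Z μ₀)ᵀ
      + U μ₀ * Sig μ₀ * Z'ᵀ) * Z μ₀
      = (U μ₀)ᵀ * U' * Sig μ₀ + Sig' + Sig μ₀ * (Z'ᵀ * Z μ₀) := by
    rw [Matrix.mul_add, Matrix.mul_add, Matrix.add_mul, Matrix.add_mul]
    congr 1
    · congr 1
      · calc (U μ₀)ᵀ * (U' * Sig μ₀ * (Z μ₀)ᵀ) * Z μ₀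
            = (U μ₀)ᵀ * U' * Sig μ₀ * ((Z μ₀)ᵀ * Z μ₀) := by
              simp only [Matrix.mul_assoc]
          _ = (U μ₀)ᵀ * U' * Sig μ₀ := by rw [hZZ, Matrix.mul_one]
      · calc (U μ₀)ᵀ * (U μ₀ * Sig' * (Z μ₀)ᵀ) * Z μ₀
            = (U μ₀)ᵀ * U μ₀ * (Sig' * ((Z μ₀)ᵀ * Z μ₀)) := by
              simp only [Matrix.mul_assoc]
          _ = Sig' := by rw [hZZ, hUU, Matrix.mul_one, Matrix.one_mul]
    · calc (U μ₀)ᵀ * (U μ₀ * Sig μ₀ * Z'ᵀ) * Z μ₀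
          = (U μ₀)ᵀ * U μ₀ * (Sig μ₀ * (Z'ᵀ * Z μ₀)) := by
            simp only [Matrix.mul_assoc]
        _ = Sig μ₀ * (Z'ᵀ * Z μ₀) := by rw [hUU, Matrix.one_mul]
  rw [expand]
  simp only [Matrix.add_apply]
  have h1 : ((U μ₀)ᵀ * U' * Sig μ₀) j j = 0 := by
    rw [Matrix.mul_apply, Finset.sum_eq_single j]
    · have : ((U μ₀)ᵀ * U') j j = ∑ a, U μ₀ a j * U' a j := by
        simp [Matrix.mul_apply, Matrix.transpose_apply]
      rw [this, hUder, zero_mul]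
    · intro k _ hk
      rw [hdiag0 hk, mul_zero]
    · intro h; exact absurd (Finset.mem_univ j) h
  have h3 : (Sig μ₀ * (Z'ᵀ * Z μ₀)) j j = 0 := by
    rw [Matrix.mul_apply, Finset.sum_eq_single j]
    · have : (Z'ᵀ * Z μ₀) j j = ∑ b, Z μ₀ b j * Z' b j := by
        simp only [Matrix.mul_apply, Matrix.transpose_apply]
        exact Finset.sum_congr rfl fun b _ => by ring
      rw [this, hZder, mul_zero]
    · intro k _ hk
      rw [hdiag0 (Ne.symm hk), zero_mul]
    · intro h; exact absurd (Finset.mem_univ j) h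
  rw [h1, h3, zero_add, add_zero]
end
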